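/- Let g : ℝ → ℝ be nondecreasing, continuous, with g(0) = 0, and suppose ∫₁^∞ s^{-p-1} (ln s)^q (g(s) - g(-s)) ds < ∞ for some p > 1 and q ≥ 0. Let (Ω, μ) be a finite measure space and v : Ω → ℝ measurable such that for all s > 1, μ({x : |v(x)| > s}) ≤ C s^{-p}(1 + ln s)^q for some constant C. Then g(|v|), g(-|v|) and g(v) are all μ-integrable on Ω. -/

import Mathlib

open MeasureTheory

set_option maxHeartbeats 1600000 in
/-- Distribution-function integrability criterion: a subcritical growth condition on a
nondecreasing nonlinearity `g` together with a weak-`Lᵖ`-with-logarithm bound on the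
distribution function of `v` implies `g(|v|), g(-|v|), g(v) ∈ L¹(μ)`. -/
theorem stmt4 (g : ℝ → ℝ) (hg : Monotone g) (hgc : Continuous g) (hg0 : g 0 = 0)
    (p q : ℝ) (hp : 1 < p) (hq : 0 ≤ q)
    (hint : IntegrableOn
      (fun s : ℝ => s ^ (-p - 1) * Real.log s ^ q * (g s - g (-s))) (Set.Ici 1))
    {Ω : Type*} [MeasurableSpace Ω] (μ : Measure Ω) [IsFiniteMeasure μ]
    (v : Ω → ℝ) (hv : Measurable v) (C : ℝ)
    (he : ∀ s : ℝ, 1 < s →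
      μ {x | s < |v x|} ≤ ENNReal.ofReal (C * s ^ (-p) * (1 + Real.log s) ^ q)) :
    Integrable (fun x => g |v x|) μ ∧ Integrable (fun x => g (-|v x|)) μ ∧
      Integrable (fun x => g (v x)) μ := by
  -- Basic facts about G s = g s - g (-s)
  set G : ℝ → ℝ := fun s => g s - g (-s) with hG_def
  have hGnn : ∀ s : ℝ, 0 ≤ s → 0 ≤ G s := fun s hs =>
    sub_nonneg.2 (hg (by linarith))
  have hGmono : ∀ a b : ℝ, 0 ≤ a → a ≤ b → G a ≤ G b := fun a b ha hab =>
    sub_le_sub (hg hab) (hg (by linarith))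
  have hGm : Measurable G := (hgc.sub (hgc.comp continuous_neg)).measurable
  -- weight functions
  set w : ℝ → ℝ := fun s => s ^ (-p - 1) * Real.log s ^ q * G s with hw_def
  set φ : ℝ → ℝ := fun s => 2 ^ (p + 1) * s ^ p * Real.log (s / 2) ^ (-q) * w s
    with hφ_def
  have hwm : Measurable w := by
    simp only [hw_def]
    exact ((measurable_id.pow_const (-p - 1)).mul
      (Real.measurable_log.pow_const q)).mul hGm
  have hφm : Measurable φ := by
    simp only [hφ_def]
    exact ((measurable_const.mul (measurable_id.pow_const p)).mul
      ((Real.measurable_log.comp (measurable_id.div_const 2)).pow_const (-q))).mul hwm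
  -- cutoff
  set c : ℝ := 2 * Real.exp 1 with hc_def
  have hexp1 : (2.7182818283 : ℝ) < Real.exp 1 := Real.exp_one_gt_d9
  have hc1 : (2 : ℝ) < c := by rw [hc_def]; nlinarith
  have hc0 : (0 : ℝ) < c := by linarith
  -- logarithm facts
  have hlog_half : ∀ s : ℝ, c ≤ s → 1 ≤ Real.log (s / 2) := by
    intro s hs
    rw [Real.le_log_iff_exp_le (by linarith)]
    rw [hc_def] at hs; linarith
  -- modified constant
  set C' : ℝ := max C 0 with hC'_def
  have hC'nn : 0 ≤ C' := le_max_right _ _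
  have he' : ∀ s : ℝ, 1 < s →
      μ {x | s < |v x|} ≤ ENNReal.ofReal (C' * (s ^ (-p) * (1 + Real.log s) ^ q)) := by
    intro s hs
    refine (he s hs).trans (ENNReal.ofReal_le_ofReal ?_)
    have h1 : 0 ≤ (1 : ℝ) + Real.log s := by
      have := Real.log_pos hs; linarith
    have h2 : 0 ≤ s ^ (-p) * (1 + Real.log s) ^ q :=
      mul_nonneg (Real.rpow_nonneg (by linarith) _) (Real.rpow_nonneg h1 _)
    calc C * s ^ (-p) * (1 + Real.log s) ^ q
        = C * (s ^ (-p) * (1 + Real.log s) ^ q) := by ring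
      _ ≤ C' * (s ^ (-p) * (1 + Real.log s) ^ q) :=
          mul_le_mul_of_nonneg_right (le_max_left _ _) h2
  -- finiteness of the weight integral
  have hwfin : ∫⁻ s in Set.Ici (1 : ℝ), ENNReal.ofReal (w s) < ⊤ := by
    refine lt_of_le_of_lt (lintegral_mono fun s => ?_) hint.2
    rw [Real.enorm_eq_ofReal_abs]
    exact ENNReal.ofReal_le_ofReal (le_abs_self _)
  -- the kernel
  set E : Set (Ω × ℝ) :=
    {z | |v z.1| < z.2 ∧ z.2 < 2 * |v z.1| ∧ c ≤ |v z.1|} with hE_def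
  have hvm : Measurable fun z : Ω × ℝ => |v z.1| := (hv.comp measurable_fst).abs
  have hE : MeasurableSet E := by
    refine (measurableSet_lt hvm measurable_snd).inter ?_
    exact (measurableSet_lt measurable_snd (hvm.const_mul 2)).inter
      (measurableSet_le measurable_const hvm)
  set F : Ω → ℝ → ENNReal :=
    fun x s => E.indicator (fun z => ENNReal.ofReal (φ z.2)) (x, s) with hF_def
  have hF : ∀ x s, F x s =
      if |v x| < s ∧ s < 2 * |v x| ∧ c ≤ |v x| then ENNReal.ofReal (φ s) else 0 := by
    intro x s
    simp only [hF_def, Set.indicator_apply, hE_def, Set.mem_setOf_eq]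
  have hFm : Measurable (Function.uncurry F) := by
    have h : Function.uncurry F = E.indicator (fun z => ENNReal.ofReal (φ z.2)) := rfl
    rw [h]
    exact ((hφm.comp measurable_snd).ennreal_ofReal).indicator hE
  -- core pointwise estimate
  have h_core : ∀ x, c ≤ |v x| → ENNReal.ofReal (G |v x|) ≤ ∫⁻ s, F x s := by
    intro x hx
    set r : ℝ := |v x| with hr_def
    have hr0 : (0 : ℝ) < r := lt_of_lt_of_le hc0 hx
    have hkey : ∀ s ∈ Set.Ioo r (2 * r), G r / r ≤ φ s := by
      intro s hs
      obtain ⟨hs1, hs2⟩ := hs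
      have hs0 : (0 : ℝ) < s := lt_trans hr0 hs1
      have hcs : c ≤ s := le_of_lt (lt_of_le_of_lt hx hs1)
      have hL : 1 ≤ Real.log (s / 2) := hlog_half s hcs
      have hLs : Real.log (s / 2) ≤ Real.log s :=
        Real.log_le_log (by linarith) (by linarith)
      have hGr : G r ≤ G s := hGmono r s hr0.le hs1.le
      have hGs : 0 ≤ G s := hGnn s hs0.le
      -- step 1 : G r / r ≤ 2 * G s / s
      have step1 : G r / r ≤ 2 * G s / s := by
        rw [div_le_div_iff₀ hr0 hs0]
        nlinarith [mul_le_mul_of_nonneg_right hGr hs0.le,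
          mul_le_mul_of_nonneg_left hs2.le hGs]
      -- step 2 : 2 * G s / s ≤ φ s
      have e0 : p + (-p - 1) = -1 := by ring
      have e1 : s ^ p * s ^ (-p - 1) = s⁻¹ := by
        rw [← Real.rpow_add hs0, e0, Real.rpow_neg_one]
      have e2 : Real.log (s / 2) ^ (-q) * Real.log s ^ q
          = (Real.log s / Real.log (s / 2)) ^ q := by
        rw [Real.div_rpow (by linarith) (by linarith), Real.rpow_neg (by linarith)]
        ring
      have e3 : 1 ≤ (Real.log s / Real.log (s / 2)) ^ q := by
        have h1 : (1 : ℝ) ≤ Real.log s / Real.log (s / 2) :=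
          (one_le_div (by linarith)).2 hLs
        calc (1 : ℝ) = 1 ^ q := (Real.one_rpow q).symm
          _ ≤ (Real.log s / Real.log (s / 2)) ^ q :=
              Real.rpow_le_rpow zero_le_one h1 hq
      have e4 : (2 : ℝ) ≤ 2 ^ (p + 1) := by
        calc (2 : ℝ) = 2 ^ (1 : ℝ) := (Real.rpow_one 2).symm
          _ ≤ 2 ^ (p + 1) :=
              Real.rpow_le_rpow_of_exponent_le one_le_two (by linarith)
      have hφeq : φ s = 2 ^ (p + 1) * (s ^ p * s ^ (-p - 1)) *
          (Real.log (s / 2) ^ (-q) * Real.log s ^ q) * G s := by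
        simp only [hφ_def, hw_def]; ring
      have step2 : 2 * G s / s ≤ φ s := by
        rw [hφeq, e1, e2]
        have h5 : (2 : ℝ) ≤ 2 ^ (p + 1) * (Real.log s / Real.log (s / 2)) ^ q := by
          nlinarith
        have h6 := mul_le_mul_of_nonneg_right h5
          (mul_nonneg hGs (inv_pos.2 hs0).le)
        rw [div_eq_mul_inv]
        nlinarith [h6]
      linarith
    calc ENNReal.ofReal (G r)
        = ENNReal.ofReal (G r / r) * volume (Set.Ioo r (2 * r)) := by
          rw [Real.volume_Ioo]
          rw [← ENNReal.ofReal_mul (div_nonneg (hGnn r hr0.le) hr0.le)]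
          congr 1
          have h2r : 2 * r - r = r := by ring
          rw [h2r, div_mul_cancel₀ _ hr0.ne']
      _ = ∫⁻ s in Set.Ioo r (2 * r), ENNReal.ofReal (G r / r) :=
          (setLIntegral_const _ _).symm
      _ ≤ ∫⁻ s in Set.Ioo r (2 * r), ENNReal.ofReal (φ s) :=
          setLIntegral_mono hφm.ennreal_ofReal
            (fun s hs => ENNReal.ofReal_le_ofReal (hkey s hs))
      _ = ∫⁻ s, (Set.Ioo r (2 * r)).indicator (fun s => ENNReal.ofReal (φ s)) s :=
          (lintegral_indicator measurableSet_Ioo _).symm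
      _ = ∫⁻ s, F x s := by
          refine lintegral_congr fun s => ?_
          rw [hF]
          simp only [Set.indicator_apply, Set.mem_Ioo]
          by_cases h : r < s ∧ s < 2 * r
          · exact (if_pos h).trans (if_pos ⟨h.1, h.2, hx⟩).symm
          · simp only [h, if_false]
            rw [if_neg]
            rintro ⟨h1, h2, _⟩
            exact h ⟨h1, h2⟩
  -- inner integral bound
  have h_inner : ∀ s : ℝ, ∫⁻ x, F x s ∂μ ≤
      (Set.Ioi c).indicator (fun s => ENNReal.ofReal (φ s) *
        ENNReal.ofReal (C' * ((s / 2) ^ (-p) * (1 + Real.log (s / 2)) ^ q))) s := by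
    intro s
    set A : Set Ω := {x | |v x| < s ∧ s < 2 * |v x| ∧ c ≤ |v x|} with hA_def
    have hAm : MeasurableSet A := by
      refine (measurableSet_lt hv.abs measurable_const).inter ?_
      exact (measurableSet_lt measurable_const (hv.abs.const_mul 2)).inter
        (measurableSet_le measurable_const hv.abs)
    have hFA : (fun x => F x s) = A.indicator fun _ => ENNReal.ofReal (φ s) := by
      funext x
      rw [hF]
      simp only [Set.indicator_apply, hA_def, Set.mem_setOf_eq]
    rw [hFA, lintegral_indicator_const hAm]
    by_cases hcs : c < s
    · have h12 : (1 : ℝ) < s / 2 := by linarith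
      have hsub : A ⊆ {x | s / 2 < |v x|} := by
        rintro x ⟨_, h2, _⟩
        simp only [Set.mem_setOf_eq]
        linarith
      have hμ : μ A ≤ ENNReal.ofReal (C' * ((s / 2) ^ (-p) * (1 + Real.log (s / 2)) ^ q)) :=
        (measure_mono hsub).trans (he' (s / 2) h12)
      rw [Set.indicator_of_mem (Set.mem_Ioi.2 hcs)]
      exact mul_le_mul' le_rfl hμ
    · have hA0 : A = ∅ := by
        ext x
        simp only [hA_def, Set.mem_setOf_eq, Set.mem_empty_iff_false, iff_false]
        rintro ⟨h1, _, h3⟩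
        exact hcs (lt_of_le_of_lt h3 h1)
      rw [hA0]
      simp
  -- the kernel-integral bound on Ioi c
  set D : ℝ := C' * (2 ^ (p + 1) * (2 ^ p * 2 ^ q)) with hD_def
  have hD_nn : 0 ≤ D := by
    rw [hD_def]
    exact mul_nonneg hC'nn (by positivity)
  have h_kernel : ∀ s ∈ Set.Ioi c, ENNReal.ofReal (φ s) *
      ENNReal.ofReal (C' * ((s / 2) ^ (-p) * (1 + Real.log (s / 2)) ^ q)) ≤
      ENNReal.ofReal D * ENNReal.ofReal (w s) := by
    intro s hs
    have hcs : c ≤ s := le_of_lt hs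
    have hs0 : (0 : ℝ) < s := lt_of_lt_of_le hc0 hcs
    have hL : 1 ≤ Real.log (s / 2) := hlog_half s hcs
    have hw_nn : 0 ≤ w s := by
      have hGs : 0 ≤ G s := hGnn s hs0.le
      have hls : (0:ℝ) ≤ Real.log s := by
        have := Real.log_le_log (by linarith : (0:ℝ) < s/2) (by linarith : s/2 ≤ s)
        linarith
      exact mul_nonneg (mul_nonneg (Real.rpow_nonneg hs0.le _)
        (Real.rpow_nonneg hls _)) hGs
    have hφ_nn : 0 ≤ φ s := by
      have h1 : (0:ℝ) ≤ (2:ℝ) ^ (p + 1) := Real.rpow_nonneg (by norm_num) _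
      have h2 : (0:ℝ) ≤ s ^ p := Real.rpow_nonneg hs0.le _
      have h3 : (0:ℝ) ≤ Real.log (s / 2) ^ (-q) := Real.rpow_nonneg (by linarith) _
      simp only [hφ_def]
      exact mul_nonneg (mul_nonneg (mul_nonneg h1 h2) h3) hw_nn
    rw [← ENNReal.ofReal_mul hφ_nn, ← ENNReal.ofReal_mul hD_nn]
    refine ENNReal.ofReal_le_ofReal ?_
    -- real inequality
    have hs' : s ≠ 0 := hs0.ne'
    have hL0 : (0:ℝ) < Real.log (s / 2) := by linarith
    have a1 : s ^ p * (s / 2) ^ (-p) = 2 ^ p := by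
      have h2 : s / (s / 2) = 2 := by field_simp
      calc s ^ p * (s / 2) ^ (-p) = s ^ p / (s / 2) ^ p := by
            rw [Real.rpow_neg (by linarith : (0:ℝ) ≤ s / 2)]
            ring
        _ = (s / (s / 2)) ^ p := (Real.div_rpow hs0.le (by linarith) p).symm
        _ = 2 ^ p := by rw [h2]
    have a2 : Real.log (s / 2) ^ (-q) * (1 + Real.log (s / 2)) ^ q ≤ 2 ^ q := by
      have h1 : Real.log (s / 2) ^ (-q) * (1 + Real.log (s / 2)) ^ q
          = ((1 + Real.log (s / 2)) / Real.log (s / 2)) ^ q := by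
        rw [Real.div_rpow (by linarith) hL0.le, Real.rpow_neg hL0.le]
        ring
      rw [h1]
      have h3 : (1 + Real.log (s / 2)) / Real.log (s / 2) ≤ 2 := by
        rw [div_le_iff₀ hL0]
        linarith
      exact Real.rpow_le_rpow (div_nonneg (by linarith) hL0.le) h3 hq
    have hexp : φ s * (C' * ((s / 2) ^ (-p) * (1 + Real.log (s / 2)) ^ q)) =
        (C' * 2 ^ (p + 1) * w s) * ((s ^ p * (s / 2) ^ (-p)) *
          (Real.log (s / 2) ^ (-q) * (1 + Real.log (s / 2)) ^ q)) := by
      simp only [hφ_def]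
      ring
    rw [hexp, a1]
    have hbase : 0 ≤ C' * 2 ^ (p + 1) * w s :=
      mul_nonneg (mul_nonneg hC'nn (Real.rpow_nonneg (by norm_num) _)) hw_nn
    calc (C' * 2 ^ (p + 1) * w s) *
          (2 ^ p * (Real.log (s / 2) ^ (-q) * (1 + Real.log (s / 2)) ^ q))
        ≤ (C' * 2 ^ (p + 1) * w s) * (2 ^ p * 2 ^ q) := by
          refine mul_le_mul_of_nonneg_left ?_ hbase
          exact mul_le_mul_of_nonneg_left a2 (Real.rpow_nonneg (by norm_num) _)
      _ = D * w s := by rw [hD_def]; ring_nf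
  -- the double integral is finite
  have h_double : ∫⁻ x, (∫⁻ s, F x s) ∂μ < ⊤ := by
    rw [lintegral_lintegral_swap hFm.aemeasurable]
    have hIoi : Set.Ioi c ⊆ Set.Ici (1 : ℝ) := by
      intro s hs
      simp only [Set.mem_Ioi] at hs
      simp only [Set.mem_Ici]
      linarith
    calc ∫⁻ s, ∫⁻ x, F x s ∂μ
        ≤ ∫⁻ s, (Set.Ioi c).indicator (fun s => ENNReal.ofReal (φ s) *
            ENNReal.ofReal (C' * ((s / 2) ^ (-p) * (1 + Real.log (s / 2)) ^ q))) s :=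
          lintegral_mono h_inner
      _ = ∫⁻ s in Set.Ioi c, ENNReal.ofReal (φ s) *
            ENNReal.ofReal (C' * ((s / 2) ^ (-p) * (1 + Real.log (s / 2)) ^ q)) :=
          lintegral_indicator measurableSet_Ioi _
      _ ≤ ∫⁻ s in Set.Ioi c, ENNReal.ofReal D * ENNReal.ofReal (w s) :=
          setLIntegral_mono (measurable_const.mul hwm.ennreal_ofReal) h_kernel
      _ = ENNReal.ofReal D * ∫⁻ s in Set.Ioi c, ENNReal.ofReal (w s) :=
          lintegral_const_mul _ hwm.ennreal_ofReal
      _ ≤ ENNReal.ofReal D * ∫⁻ s in Set.Ici (1:ℝ), ENNReal.ofReal (w s) :=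
          mul_le_mul' le_rfl (lintegral_mono_set hIoi)
      _ < ⊤ := ENNReal.mul_lt_top ENNReal.ofReal_lt_top hwfin
  -- integrability of G ∘ |v|
  have h_main : Integrable (fun x => G (|v x|)) μ := by
    refine ⟨(hGm.comp hv.abs).aestronglyMeasurable, ?_⟩
    rw [hasFiniteIntegral_iff_ofReal
      (Filter.Eventually.of_forall fun x => hGnn _ (abs_nonneg _))]
    calc ∫⁻ x, ENNReal.ofReal (G |v x|) ∂μ
        ≤ ∫⁻ x, (ENNReal.ofReal (G c) + ∫⁻ s, F x s) ∂μ := by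
          refine lintegral_mono fun x => ?_
          by_cases h : c ≤ |v x|
          · exact le_add_left (h_core x h)
          · exact le_add_right (ENNReal.ofReal_le_ofReal
              (hGmono _ _ (abs_nonneg _) (le_of_not_ge h)))
      _ = ENNReal.ofReal (G c) * μ Set.univ + ∫⁻ x, (∫⁻ s, F x s) ∂μ := by
          rw [lintegral_add_left measurable_const, lintegral_const]
      _ < ⊤ := ENNReal.add_lt_top.2
          ⟨ENNReal.mul_lt_top ENNReal.ofReal_lt_top (measure_lt_top μ _), h_double⟩
  -- conclusion
  have hb1 : ∀ x : Ω, 0 ≤ g |v x| := by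
    intro x
    have := hg (abs_nonneg (v x))
    rwa [hg0] at this
  have hb2 : ∀ x : Ω, g (-|v x|) ≤ 0 := by
    intro x
    have := hg (neg_nonpos.2 (abs_nonneg (v x)))
    rwa [hg0] at this
  refine ⟨?_, ?_, ?_⟩
  · refine h_main.mono' (hgc.measurable.comp hv.abs).aestronglyMeasurable
      (Filter.Eventually.of_forall fun x => ?_)
    rw [Real.norm_eq_abs, abs_of_nonneg (hb1 x)]
    have := hb2 x
    simp only [hG_def]
    linarith
  · refine h_main.mono' ((hgc.measurable.comp hv.abs.neg)).aestronglyMeasurable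
      (Filter.Eventually.of_forall fun x => ?_)
    rw [Real.norm_eq_abs, abs_of_nonpos (hb2 x)]
    have := hb1 x
    simp only [hG_def]
    linarith
  · refine h_main.mono' (hgc.measurable.comp hv).aestronglyMeasurable
      (Filter.Eventually.of_forall fun x => ?_)
    rw [Real.norm_eq_abs, abs_le]
    have h1 := hb1 x
    have h2 := hb2 x
    have h3 : g (v x) ≤ g |v x| := hg (le_abs_self _)
    have h4 : g (-|v x|) ≤ g (v x) := hg (neg_abs_le _)
    simp only [hG_def]
    constructor <;> linarith
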